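/- For all real numbers a, b, x, y and all X, Y ∈ E, one has exp(ad(bB+X+yZ))(aB+Y+xZ) = aB + e^{b/2}Y − (a/2)ρ(b/2)X + ( x e^{b} − a y ρ(b) + e^{b/2}ρ(b/2)⟨JX,Y⟩ )Z. -/

import Mathlib

open scoped RealInnerProductSpace

noncomputable section

namespace CHn

/-- `E n` is `ℂ^{n-1}`, viewed as a real inner product space with `⟪U,V⟫ = Re⟪U,V⟫_ℂ`
and complex structure `JU = iU`. -/
abbrev E (n : ℕ) := EuclideanSpace ℂ (Fin (n - 1))

/-- The solvable part `𝔰 = 𝔞 ⊕ 𝔫` of the Iwasawa decomposition of `𝔰𝔲(1,n)`, modeled as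
`ℝB ⊕ E ⊕ ℝZ`; the element `(a, U, x)` represents `aB + U + xZ`. -/
abbrev S (n : ℕ) := ℝ × E n × ℝ

variable (n : ℕ)

/-- The vector `B`. -/
def B : S n := (1, 0, 0)

/-- The vector `Z`. -/
def Z : S n := (0, 0, 1)

/-- The inner product of `𝔰` (`B`, `Z` unit, orthogonal direct sum `ℝB ⊕ E ⊕ ℝZ`). -/
def sInner (X Y : S n) : ℝ := X.1 * Y.1 + ⟪X.2.1, Y.2.1⟫ + X.2.2 * Y.2.2

/-- The ambient complex structure on `𝔰`: `J(aB + U + xZ) = -xB + JU + aZ`. -/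
def Js : S n →ₗ[ℝ] S n where
  toFun X := (-X.2.2, Complex.I • X.2.1, X.1)
  map_add' X Y := by
    refine Prod.ext ?_ (Prod.ext ?_ ?_)
    · simp; ring
    · simp [smul_add]
    · simp
  map_smul' c X := by
    refine Prod.ext ?_ (Prod.ext ?_ ?_)
    · simp only [Prod.smul_fst, Prod.smul_snd, smul_eq_mul, RingHom.id_apply]; ring
    · simp [Prod.smul_fst, Prod.smul_snd, smul_comm c Complex.I]
    · simp

/-- The Lie bracket of `𝔰`:
`[aB + U + xZ, bB + V + yZ] = (1/2)(aV - bU) + (ay - bx + ⟪JU, V⟫)Z`. -/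
def bra (X Y : S n) : S n :=
  (0, (2⁻¹ : ℝ) • (X.1 • Y.2.1 - Y.1 • X.2.1),
    X.1 * Y.2.2 - Y.1 * X.2.2 + ⟪Complex.I • X.2.1, Y.2.1⟫)

/-- `ad(X) = [X, ·]`, a (continuous) linear endomorphism of `𝔰`. -/
def ad (X : S n) : S n →L[ℝ] S n :=
  LinearMap.toContinuousLinearMap
    { toFun := bra n X
      map_add' := fun Y Y' => by
        unfold bra
        refine Prod.ext ?_ (Prod.ext ?_ ?_)
        · simp
        · simp only [Prod.fst_add, Prod.snd_add]
          module
        · simp only [Prod.fst_add, Prod.snd_add, inner_add_right]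
          ring
      map_smul' := fun c Y => by
        unfold bra
        have h : ⟪Complex.I • X.2.1, c • Y.2.1⟫ = c * ⟪Complex.I • X.2.1, Y.2.1⟫ :=
          real_inner_smul_right _ _ _
        refine Prod.ext ?_ (Prod.ext ?_ ?_)
        · simp
        · simp only [Prod.smul_fst, Prod.smul_snd, smul_eq_mul, RingHom.id_apply]
          module
        · simp only [Prod.smul_fst, Prod.smul_snd, smul_eq_mul, h, RingHom.id_apply]
          ring }

/-- `exp(ad(X)) = Σ_{k ≥ 0} ad(X)^k / k!`. -/
def expAd (X : S n) : S n →L[ℝ] S n := NormedSpace.exp (ad n X)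

/-- `ρ(t) = (e^t - 1)/t` for `t ≠ 0`, `ρ(0) = 1`. -/
def rho (t : ℝ) : ℝ := if t = 0 then 1 else (Real.exp t - 1) / t

/-- The Iwasawa group `AN`, modeled as `G = ℝ × E × ℝ`. -/
abbrev G (n : ℕ) := ℝ × E n × ℝ

/-- The product of `G`:
`(a,P,p)·(b,Q,q) = (a+b, P + e^{a/2}Q, p + e^a q + (1/2)e^{a/2}⟪JP,Q⟫)`. -/
def gmul (g h : G n) : G n :=
  (g.1 + h.1, g.2.1 + Real.exp (g.1 / 2) • h.2.1,
    g.2.2 + Real.exp g.1 * h.2.2 + 2⁻¹ * Real.exp (g.1 / 2) * ⟪Complex.I • g.2.1, h.2.1⟫)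

/-- The Lie exponential `Exp : 𝔰 → G`, `Exp(cB + W + zZ) = (c, ρ(c/2)W, ρ(c)z)`. -/
def Exp (X : S n) : G n := (X.1, rho (X.1 / 2) • X.2.1, rho X.1 * X.2.2)

/-- The inclusion of `E` into `𝔰`. -/
def inE : E n →ₗ[ℝ] S n where
  toFun U := (0, U, 0)
  map_add' U V := by refine Prod.ext ?_ (Prod.ext ?_ ?_) <;> simp
  map_smul' c U := by refine Prod.ext ?_ (Prod.ext ?_ ?_) <;> simp

/-- A real subspace of `E` is totally real if `⟪Ju, v⟫ = 0` for all its elements. -/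
def TotallyRealE (V : Submodule ℝ (E n)) : Prop :=
  ∀ u ∈ V, ∀ v ∈ V, ⟪Complex.I • u, v⟫ = 0

/-- A real subspace of `E` is complex if it is `J`-invariant. -/
def IsComplexE (V : Submodule ℝ (E n)) : Prop :=
  ∀ u ∈ V, Complex.I • u ∈ V

/-- The maximal complex subspace `V ∩ JV` of a real subspace `V` of `E`. -/
def maxCE (V : Submodule ℝ (E n)) : Set (E n) := {w | w ∈ V ∧ Complex.I • w ∈ V}

/-- `V` is a CR subspace of `E` if the orthogonal complement in `V` of its maximal
complex subspace `V ∩ JV` is totally real. -/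
def IsCRE (V : Submodule ℝ (E n)) : Prop :=
  ∀ u ∈ V, ∀ v ∈ V, (∀ w ∈ maxCE n V, ⟪u, w⟫ = 0) →
    (∀ w ∈ maxCE n V, ⟪v, w⟫ = 0) → ⟪Complex.I • u, v⟫ = 0

/-- A subset of `𝔰` is totally real if `⟪Ju, v⟫ = 0` for all its elements. -/
def TotallyRealS (V : Set (S n)) : Prop := ∀ u ∈ V, ∀ v ∈ V, sInner n (Js n u) v = 0

/-- The maximal complex subspace `V ∩ JV` of a real subspace `V` of `𝔰`. -/
def maxCS (V : Set (S n)) : Set (S n) := {x | x ∈ V ∧ Js n x ∈ V}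

/-- `V` is a CR subspace of `𝔰` if the orthogonal complement in `V` of its maximal
complex subspace `V ∩ JV` is totally real. -/
def IsCRS (V : Set (S n)) : Prop :=
  ∀ u ∈ V, ∀ v ∈ V, (∀ w ∈ maxCS n V, sInner n u w = 0) →
    (∀ w ∈ maxCS n V, sInner n v w = 0) → sInner n (Js n u) v = 0


/-- `⟪iX, X⟫_ℝ = 0` for `X` in a complex Euclidean space. -/
lemma aux_inner_I_smul_self {m : ℕ} (X : EuclideanSpace ℂ (Fin m)) :
    ⟪Complex.I • X, X⟫ = 0 := by
  rw [PiLp.inner_apply]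
  apply Finset.sum_eq_zero
  intro i _
  simp [Complex.inner, Complex.mul_re, Complex.mul_im]
  ring

lemma aux_sig_summable (t : ℝ) :
    Summable (fun k : ℕ => t ^ k / (Nat.factorial (k + 1) : ℝ)) := by
  apply Summable.of_norm_bounded (Real.summable_pow_div_factorial |t|)
  intro k
  rw [Real.norm_eq_abs, abs_div, abs_pow, Nat.abs_cast]
  gcongr
  exact Nat.le_succ k

lemma aux_sig_eq_rho (t : ℝ) :
    ∑' k : ℕ, t ^ k / (Nat.factorial (k + 1) : ℝ) = rho t := by
  have hexp : Real.exp t = ∑' k : ℕ, t ^ k / (Nat.factorial k : ℝ) := by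
    rw [Real.exp_eq_exp_ℝ, NormedSpace.exp_eq_tsum_div]
  have hmul : t * ∑' k : ℕ, t ^ k / (Nat.factorial (k + 1) : ℝ) = Real.exp t - 1 := by
    rw [← tsum_mul_left]
    have h : ∀ k : ℕ, t * (t ^ k / (Nat.factorial (k + 1) : ℝ))
        = t ^ (k + 1) / (Nat.factorial (k + 1) : ℝ) := by
      intro k; rw [pow_succ]; ring
    rw [tsum_congr h]
    have hs : Summable (fun k : ℕ => t ^ k / (Nat.factorial k : ℝ)) :=
      Real.summable_pow_div_factorial t
    rw [hexp, Summable.tsum_eq_zero_add hs]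
    simp
  rcases eq_or_ne t 0 with h | h
  · subst h
    rw [rho, if_pos rfl, tsum_eq_single 0]
    · simp
    · intro k hk; simp [zero_pow hk]
  · rw [rho, if_neg h, ← hmul]; field_simp

lemma aux_exp_eq_rho (t : ℝ) : Real.exp t = 1 + t * rho t := by
  rcases eq_or_ne t 0 with h | h
  · subst h; simp [rho]
  · rw [rho, if_neg h]; field_simp; ring

lemma aux_rho_half (b : ℝ) :
    Real.exp (b / 2) * rho (b / 2) = 2 * rho b - rho (b / 2) := by
  rcases eq_or_ne b 0 with h | h
  · subst h; norm_num [rho]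
  · have h2 : b / 2 ≠ 0 := div_ne_zero h two_ne_zero
    have he : Real.exp b = Real.exp (b / 2) * Real.exp (b / 2) := by
      rw [← Real.exp_add]; ring_nf
    rw [rho, rho, if_neg h, if_neg h2]
    field_simp
    linear_combination (-1 : ℝ) * he

/-- For all real `a, b, x, y` and all `X, Y ∈ E`, one has
`exp(ad(bB+X+yZ))(aB+Y+xZ) = aB + e^{b/2}Y − (a/2)ρ(b/2)X
  + (xe^b − ayρ(b) + e^{b/2}ρ(b/2)⟨JX,Y⟩)Z`. -/

theorem statement2 (n : ℕ) (hn : 2 ≤ n) (a b x y : ℝ) (X Y : E n) :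
    expAd n ((b, X, y) : S n) ((a, Y, x) : S n) =
      ((a, Real.exp (b / 2) • Y - (a / 2 * rho (b / 2)) • X,
        x * Real.exp b - a * y * rho b +
          Real.exp (b / 2) * rho (b / 2) * ⟪Complex.I • X, Y⟫) : S n) := by
  classical
  set v : S n := ((a, Y, x) : S n) with hv
  set W : S n := ((b, X, y) : S n) with hW
  set c : ℝ := ⟪Complex.I • X, Y⟫ with hc
  set V1 : E n := (2⁻¹ : ℝ) • (b • Y - a • X) with hV1
  have had : ∀ u : S n, ad n W u = bra n W u := fun u => rfl
  have hIX : ⟪Complex.I • X, X⟫ = 0 := aux_inner_I_smul_self X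
  have hIV1 : ⟪Complex.I • X, V1⟫ = b / 2 * c := by
    rw [hV1, real_inner_smul_right, inner_sub_right, real_inner_smul_right,
      real_inner_smul_right, hIX, hc]
    ring
  have key : ∀ k : ℕ, ((ad n W) ^ (k + 1)) v =
      ((0, (b / 2) ^ k • V1,
        b ^ k * (b * x - a * y + c) + (b ^ k - (b / 2) ^ k) * c) : S n) := by
    intro k
    induction k with
    | zero =>
      rw [pow_one, had]
      show ((0, (2 : ℝ)⁻¹ • (b • Y - a • X), b * x - a * y + ⟪Complex.I • X, Y⟫) : S n) = _
      refine Prod.ext rfl (Prod.ext ?_ ?_)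
      · simp [hV1]
      · rw [← hc]; ring
    | succ k ih =>
      rw [pow_succ' (ad n W) (k + 1), ContinuousLinearMap.mul_apply, ih, had]
      show ((0, (2 : ℝ)⁻¹ • (b • ((b / 2) ^ k • V1) - (0 : ℝ) • X),
          b * (b ^ k * (b * x - a * y + c) + (b ^ k - (b / 2) ^ k) * c) - 0 * y
            + ⟪Complex.I • X, (b / 2) ^ k • V1⟫) : S n) = _
      refine Prod.ext rfl (Prod.ext ?_ ?_)
      · show (2 : ℝ)⁻¹ • (b • ((b / 2) ^ k • V1) - (0 : ℝ) • X) = (b / 2) ^ (k + 1) • V1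
        match_scalars <;> ring
      · show b * (b ^ k * (b * x - a * y + c) + (b ^ k - (b / 2) ^ k) * c) - 0 * y
            + ⟪Complex.I • X, (b / 2) ^ k • V1⟫ = _
        rw [real_inner_smul_right, hIV1]
        ring
  -- expand the exponential series
  have hs : Summable (fun k : ℕ => ((Nat.factorial k : ℝ))⁻¹ • (ad n W) ^ k) :=
    NormedSpace.expSeries_summable' (𝕂 := ℝ) (ad n W)
  set g : ℕ → S n := fun k => ((Nat.factorial k : ℝ))⁻¹ • (((ad n W) ^ k) v) with hg
  have hgs : Summable g := by
    have := hs.mapL (ContinuousLinearMap.apply ℝ (S n) v)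
    simpa [hg, Function.comp] using this
  have hexp : expAd n W v = ∑' k, g k := by
    rw [expAd, NormedSpace.exp_eq_tsum (𝕂 := ℝ)]
    have h1 := (ContinuousLinearMap.apply ℝ (S n) v).map_tsum hs
    simpa [hg] using h1
  have hg0 : g 0 = v := by simp [hg]
  have hgs1 : ∀ k : ℕ, g (k + 1) =
      ((0, ((b / 2) ^ k / (Nat.factorial (k + 1) : ℝ)) • V1,
        (b ^ k * (b * x - a * y + c) + (b ^ k - (b / 2) ^ k) * c)
          / (Nat.factorial (k + 1) : ℝ)) : S n) := by
    intro k
    simp only [hg]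
    rw [key k]
    refine Prod.ext ?_ (Prod.ext ?_ ?_)
    · simp
    · show ((Nat.factorial (k + 1) : ℝ))⁻¹ • ((b / 2) ^ k • V1) = _
      rw [smul_smul]
      congr 1
      ring
    · show ((Nat.factorial (k + 1) : ℝ))⁻¹ • (b ^ k * (b * x - a * y + c)
        + (b ^ k - (b / 2) ^ k) * c) = _
      rw [smul_eq_mul]
      ring
  -- componentwise sums
  have h1 : (∑' k, g k).1 = ∑' k, (g k).1 :=
    (ContinuousLinearMap.fst ℝ ℝ (E n × ℝ)).map_tsum hgs
  have h2 : (∑' k, g k).2.1 = ∑' k, (g k).2.1 :=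
    ((ContinuousLinearMap.fst ℝ (E n) ℝ).comp
      (ContinuousLinearMap.snd ℝ ℝ (E n × ℝ))).map_tsum hgs
  have h3 : (∑' k, g k).2.2 = ∑' k, (g k).2.2 :=
    ((ContinuousLinearMap.snd ℝ (E n) ℝ).comp
      (ContinuousLinearMap.snd ℝ ℝ (E n × ℝ))).map_tsum hgs
  have hgs1' : Summable (fun k => (g k).1) :=
    hgs.mapL (ContinuousLinearMap.fst ℝ ℝ (E n × ℝ))
  have hgs2' : Summable (fun k => (g k).2.1) :=
    hgs.mapL ((ContinuousLinearMap.fst ℝ (E n) ℝ).comp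
      (ContinuousLinearMap.snd ℝ ℝ (E n × ℝ)))
  have hgs3' : Summable (fun k => (g k).2.2) :=
    hgs.mapL ((ContinuousLinearMap.snd ℝ (E n) ℝ).comp
      (ContinuousLinearMap.snd ℝ ℝ (E n × ℝ)))
  rw [hexp]
  refine Prod.ext ?_ (Prod.ext ?_ ?_)
  · -- first component
    rw [h1, tsum_eq_single 0]
    · rw [hg0]
    · intro k hk
      obtain ⟨m, rfl⟩ := Nat.exists_eq_succ_of_ne_zero hk
      rw [hgs1 m]
  · -- second component
    rw [h2, Summable.tsum_eq_zero_add hgs2', hg0]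
    have hrw : (fun k => (g (k + 1)).2.1)
        = fun k => ((b / 2) ^ k / (Nat.factorial (k + 1) : ℝ)) • V1 := by
      funext k; rw [hgs1 k]
    rw [hrw, Summable.tsum_smul_const (aux_sig_summable (b / 2)), aux_sig_eq_rho (b / 2)]
    show Y + rho (b / 2) • V1 = Real.exp (b / 2) • Y - (a / 2 * rho (b / 2)) • X
    rw [aux_exp_eq_rho (b / 2), hV1]
    match_scalars <;> ring
  · -- third component
    rw [h3, Summable.tsum_eq_zero_add hgs3', hg0]
    have hrw : (fun k => (g (k + 1)).2.2)
        = fun k => (b ^ k / (Nat.factorial (k + 1) : ℝ)) * ((b * x - a * y + c) + c)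
          - ((b / 2) ^ k / (Nat.factorial (k + 1) : ℝ)) * c := by
      funext k; rw [hgs1 k]
      show (b ^ k * (b * x - a * y + c) + (b ^ k - (b / 2) ^ k) * c)
        / (Nat.factorial (k + 1) : ℝ) = _
      ring
    rw [hrw, Summable.tsum_sub ((aux_sig_summable b).mul_right _)
      ((aux_sig_summable (b / 2)).mul_right _), tsum_mul_right, tsum_mul_right,
      aux_sig_eq_rho b, aux_sig_eq_rho (b / 2)]
    show x + (rho b * (b * x - a * y + c + c) - rho (b / 2) * c)
        = x * Real.exp b - a * y * rho b + Real.exp (b / 2) * rho (b / 2) * c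
    have hb := aux_exp_eq_rho b
    have hh := aux_rho_half b
    linear_combination (-x) * hb - c * hh


end CHn
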